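/- arXiv:2410.09070 — 4 statements merged into one kernel-verified Lean document; each statement's English description precedes it below -/
import Mathlib

section
/- Let f : ℝ₊ → ℝ be locally integrable, r ∈ ℕ, h > 1 and x ∈ ℝ₊. Then the Mellin–Steklov integral of order r satisfies the identity F_{r,h}(x) − f(x) = −(−1)^{−r} (log h)^{−r} ∫₁^h ⋯ ∫₁^h Δ^r_{(t₁⋯t_r)^{1/r}} f(x) (dt₁/t₁) ⋯ (dt_r/t_r), where Δ_s^r f(x) := Σ_{j=0}^{r} (−1)^{r−j} C(r,j) f(x s^j) for s ∈ ℝ₊. -/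
open MeasureTheory Filter Set

/-- The Haar measure `dx/x` on `(0, ∞)`, as a measure on `ℝ`. -/
noncomputable def mulHaar : Measure ℝ :=
  (volume.restrict (Set.Ioi (0:ℝ))).withDensity fun x => ENNReal.ofReal x⁻¹

/-- Sup-norm of `f` over `(0, ∞)`. -/
noncomputable def supNorm (f : ℝ → ℝ) : ℝ :=
  ⨆ x : Set.Ioi (0:ℝ), |f (x : ℝ)|

/-- The `L^p` norm with respect to the measure `dx/x` on `(0, ∞)`. -/
noncomputable def lpNorm (p : ℝ) (g : ℝ → ℝ) : ℝ :=
  (∫ x, |g x| ^ p ∂mulHaar) ^ (1 / p)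

/-- Logarithmic difference of order `m`: `Δ_h^m f (x) = ∑_{j=0}^m (-1)^{m-j} C(m,j) f (x h^j)`. -/
noncomputable def logDiff (m : ℕ) (f : ℝ → ℝ) (h x : ℝ) : ℝ :=
  ∑ j ∈ Finset.range (m + 1), (-1 : ℝ) ^ (m - j) * (m.choose j : ℝ) * f (x * h ^ j)

/-- Logarithmic modulus of smoothness of order `m`. -/
noncomputable def logModulus (m : ℕ) (f : ℝ → ℝ) (δ : ℝ) : ℝ :=
  ⨆ h : {h : ℝ // 0 < Real.log h ∧ Real.log h ≤ δ},
    supNorm fun x => logDiff m f (h : ℝ) x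

/-- The Mellin–Steklov integral of order `r`:
`F_{r,h}(x) = (-log h)^{-r} ∫₁^h ⋯ ∫₁^h ∑_{m=1}^r (-1)^{r-m+1} C(r,m)
  f (x (t₁⋯t_r)^{m/r}) dt₁/t₁ ⋯ dt_r/t_r`. -/
noncomputable def mellinSteklov (r : ℕ) (f : ℝ → ℝ) (h : ℝ) (x : ℝ) : ℝ :=
  ((-Real.log h) ^ r)⁻¹ *
    ∫ t : Fin r → ℝ in Set.univ.pi fun _ => Set.Icc 1 h,
      (∑ m ∈ Finset.Icc 1 r,
        (-1 : ℝ) ^ ((r : ℤ) - (m : ℤ) + 1) * (r.choose m : ℝ) *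
          f (x * (∏ i, t i) ^ ((m : ℝ) / (r : ℝ)))) * ∏ i, (t i)⁻¹

/-- `M₀(χ) = sup_{u > 0} ∑_{k ∈ ℤ} |χ(e^{-k} u)|`. -/
noncomputable def M0 (χ : ℝ → ℝ) : ℝ :=
  ⨆ u : Set.Ioi (0:ℝ), ∑' k : ℤ, |χ (Real.exp (-(k : ℝ)) * (u : ℝ))|

/-- The Mellin–Steklov exponential sampling operator of order `r`:
`(E_{w,r}^χ f)(x) = ∑_{k ∈ ℤ} χ(e^{-k} x^w) F_{r, e^{1/w}}(e^{k/w})`. -/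
noncomputable def samplingOp (χ : ℝ → ℝ) (r : ℕ) (f : ℝ → ℝ) (w : ℝ) (x : ℝ) : ℝ :=
  ∑' k : ℤ, χ (Real.exp (-(k : ℝ)) * x ^ w) *
    mellinSteklov r f (Real.exp (1 / w)) (Real.exp ((k : ℝ) / w))

/-- The kernel class `φ`: continuity together with conditions (χ₁), (χ₂), (χ₃). -/
structure IsKernel (χ : ℝ → ℝ) : Prop where
  cont : ContinuousOn χ (Set.Ioi 0)
  integrable : Integrable χ mulHaar
  bddOnIcc : ∃ C, ∀ x ∈ Set.Icc (Real.exp (-1)) (Real.exp 1), |χ x| ≤ C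
  summable_abs : ∀ u : ℝ, 0 < u → Summable fun k : ℤ => |χ (Real.exp (-(k : ℝ)) * u)|
  sum_eq_one : ∀ u : ℝ, 0 < u → ∑' k : ℤ, χ (Real.exp (-(k : ℝ)) * u) = 1
  m0_bdd : BddAbove (Set.range fun u : Set.Ioi (0:ℝ) =>
    ∑' k : ℤ, |χ (Real.exp (-(k : ℝ)) * (u : ℝ))|)
  decay : Tendsto (fun γ : ℝ => ⨆ u : Set.Ioi (0:ℝ),
      ∑' k : {k : ℤ // γ < |(k : ℝ) - Real.log (u : ℝ)|},
        |χ (Real.exp (-((k : ℤ) : ℝ)) * (u : ℝ))|)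
    atTop (nhds 0)

lemma aux_restrict_pi {r : ℕ} (s : Fin r → Set ℝ) (hs : ∀ i, MeasurableSet (s i)) :
    (volume : Measure (Fin r → ℝ)).restrict (Set.univ.pi s)
      = Measure.pi (fun i => volume.restrict (s i)) := by
  refine (Measure.pi_eq fun t ht => ?_).symm
  rw [Measure.restrict_apply (MeasurableSet.univ_pi ht), ← Set.pi_inter_distrib,
    volume_pi_pi]
  exact Finset.prod_congr rfl fun i _ => (Measure.restrict_apply (ht i)).symm

lemma aux_pi_prod_integrable {r : ℕ} (s : Fin r → Set ℝ) (hs : ∀ i, MeasurableSet (s i))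
    (g : Fin r → ℝ → ℝ) (hg : ∀ i, IntegrableOn (g i) (s i)) :
    IntegrableOn (fun t : Fin r → ℝ => ∏ i, g i (t i)) (Set.univ.pi s) := by
  rw [IntegrableOn, aux_restrict_pi s hs]
  exact MeasureTheory.Integrable.fintype_prod_dep (E := fun _ => ℝ) (f := g)
    (μ := fun i => volume.restrict (s i)) hg

lemma aux_pi_prod_integral {r : ℕ} (s : Fin r → Set ℝ) (hs : ∀ i, MeasurableSet (s i))
    (g : Fin r → ℝ → ℝ) :
    ∫ t : Fin r → ℝ in Set.univ.pi s, ∏ i, g i (t i) = ∏ i, ∫ v in s i, g i v := by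
  have : (∫ t : Fin r → ℝ in Set.univ.pi s, ∏ i, g i (t i))
      = ∫ t : Fin r → ℝ, ∏ i, g i (t i) ∂(Measure.pi fun i => volume.restrict (s i)) := by
    rw [← aux_restrict_pi s hs]
  rw [this]
  exact MeasureTheory.integral_fintype_prod_eq_prod (E := fun _ => ℝ) g
    (μ := fun i => volume.restrict (s i))

lemma aux_1d {f : ℝ → ℝ} (hf : LocallyIntegrableOn f (Set.Ioi 0) volume)
    {x c : ℝ} (hx : 0 < x) (hc : 0 < c) (b : ℝ) :
    IntegrableOn (fun v => f (x * Real.exp (c * v))) (Set.Icc 0 b) := by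
  set φ : ℝ → ℝ := fun v => x * Real.exp (c * v) with hφ
  have hD : ∀ v : ℝ, 0 < x * (Real.exp (c * v) * (c * 1)) := by
    intro v; positivity
  have hφd : ∀ v ∈ Icc (0:ℝ) b,
      HasDerivWithinAt φ (x * (Real.exp (c * v) * (c * 1))) (Icc 0 b) v := fun v _ =>
    (((hasDerivAt_id v).const_mul c).exp.const_mul x).hasDerivWithinAt
  have hmono : StrictMono φ := fun u v huv => by
    exact mul_lt_mul_of_pos_left
      (Real.exp_lt_exp.2 (mul_lt_mul_of_pos_left huv hc)) hx
  have himg : φ '' Icc 0 b ⊆ Icc x (x * Real.exp (c * b)) := by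
    rintro _ ⟨v, ⟨hv0, hvb⟩, rfl⟩
    constructor
    · exact le_mul_of_one_le_right hx.le (Real.one_le_exp (by positivity))
    · exact mul_le_mul_of_nonneg_left
        (Real.exp_le_exp.2 (mul_le_mul_of_nonneg_left hvb hc.le)) hx.le
  have h2 : IntegrableOn f (φ '' Icc 0 b) :=
    (hf.integrableOn_compact_subset (fun y hy => lt_of_lt_of_le hx hy.1)
      isCompact_Icc).mono_set himg
  rw [integrableOn_image_iff_integrableOn_abs_deriv_smul measurableSet_Icc hφd
    hmono.injective.injOn] at h2
  have h3 := IntegrableOn.continuousOn_mul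
    (g := fun v => (x * (Real.exp (c * v) * (c * 1)))⁻¹)
    (Continuous.continuousOn (by
      refine Continuous.inv₀ ?_ fun v => (hD v).ne'
      fun_prop)) h2 isCompact_Icc
  have h4 : ∀ v : ℝ, (x * (Real.exp (c * v) * (c * 1)))⁻¹ *
      (|x * (Real.exp (c * v) * (c * 1))| • f (φ v)) = f (x * Real.exp (c * v)) := by
    intro v
    rw [abs_of_pos (hD v), smul_eq_mul, ← mul_assoc, inv_mul_cancel₀ (hD v).ne', one_mul]
  simpa only [h4] using h3

lemma auxF {f : ℝ → ℝ} (hf : LocallyIntegrableOn f (Set.Ioi 0) volume)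
    {r : ℕ} (hr : 0 < r) {h : ℝ} (hh : 1 < h) {x : ℝ} (hx : 0 < x)
    {d : ℝ} (hd : 0 < d) :
    IntegrableOn (fun t : Fin r → ℝ => f (x * (∏ i, t i) ^ d) * ∏ i, (t i)⁻¹)
      (Set.univ.pi fun _ => Set.Icc 1 h) := by
  classical
  set i0 : Fin r := ⟨0, hr⟩ with hi0
  set a := Real.log h with ha
  have haa : 0 < a := Real.log_pos hh
  set s : Set (Fin r → ℝ) := Set.univ.pi fun _ => Set.Icc 1 h with hsdef
  have hsm : MeasurableSet s := MeasurableSet.univ_pi fun _ => measurableSet_Icc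
  have hpos : ∀ t ∈ s, ∀ i, (0:ℝ) < t i := by
    intro t ht i
    exact lt_of_lt_of_le one_pos ((ht i (mem_univ i)).1)
  set Φ : (Fin r → ℝ) → (Fin r → ℝ) :=
    fun t i => if i = i0 then ∑ j, Real.log (t j) else Real.log (t i) with hΦ
  set Φ' : (Fin r → ℝ) → ((Fin r → ℝ) →L[ℝ] (Fin r → ℝ)) :=
    fun t => ContinuousLinearMap.pi (fun i =>
      if i = i0 then (∑ j, (t j)⁻¹ • ContinuousLinearMap.proj j)
      else (t i)⁻¹ • ContinuousLinearMap.proj i) with hΦ'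
  have hderiv : ∀ t ∈ s, HasFDerivWithinAt Φ (Φ' t) s t := by
    intro t ht
    refine (hasFDerivAt_pi''  fun i => ?_).hasFDerivWithinAt
    rw [hΦ', ContinuousLinearMap.proj_pi]
    by_cases hi : i = i0
    · simp only [hΦ, hi, if_pos rfl, ite_true]
      exact HasFDerivAt.fun_sum fun j _ =>
        (hasFDerivAt_apply j t).log (hpos t ht j).ne'
    · simp only [hΦ, if_neg hi]
      exact (hasFDerivAt_apply i t).log (hpos t ht i).ne'
  have hinj : InjOn Φ s := by
    intro p hp q hq hpq
    have hcomp : ∀ i, i ≠ i0 → p i = q i := by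
      intro i hi
      have := congrFun hpq i
      simp only [hΦ, if_neg hi] at this
      rw [← Real.exp_log (hpos p hp i), this, Real.exp_log (hpos q hq i)]
    have hsum := congrFun hpq i0
    simp only [hΦ, if_pos rfl] at hsum
    have hrest : ∑ j ∈ Finset.univ.erase i0, Real.log (p j)
        = ∑ j ∈ Finset.univ.erase i0, Real.log (q j) := by
      refine Finset.sum_congr rfl fun j hj => ?_
      rw [hcomp j (Finset.mem_erase.mp hj).1]
    rw [← Finset.add_sum_erase _ _ (Finset.mem_univ i0),
        ← Finset.add_sum_erase _ _ (Finset.mem_univ i0), hrest,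
        add_left_inj] at hsum
    funext i
    by_cases hi : i = i0
    · rw [hi, ← Real.exp_log (hpos p hp i0), hsum, Real.exp_log (hpos q hq i0)]
    · exact hcomp i hi
  have hdet : ∀ t ∈ s, (Φ' t).det = ∏ i, (t i)⁻¹ := by
    intro t ht
    rw [ContinuousLinearMap.det]
    rw [← LinearMap.det_toMatrix (Pi.basisFun ℝ (Fin r))]
    have hM : ∀ i j, (LinearMap.toMatrix (Pi.basisFun ℝ (Fin r)) (Pi.basisFun ℝ (Fin r))
        ((Φ' t) : (Fin r → ℝ) →ₗ[ℝ] (Fin r → ℝ))) i j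
        = if i = i0 then (t j)⁻¹ else if i = j then (t i)⁻¹ else 0 := by
      intro i j
      rw [LinearMap.toMatrix_apply]
      simp only [Pi.basisFun_repr, Pi.basisFun_apply, ContinuousLinearMap.coe_coe,
        hΦ', ContinuousLinearMap.pi_apply]
      by_cases hi : i = i0
      · simp only [if_pos hi, ContinuousLinearMap.coe_sum', Finset.sum_apply,
          ContinuousLinearMap.smul_apply, ContinuousLinearMap.proj_apply, smul_eq_mul]
        rw [Finset.sum_eq_single j]
        · simp
        · intro k _ hk
          simp [Pi.single_apply, hk]
        · simp
      · simp only [if_neg hi, ContinuousLinearMap.smul_apply,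
          ContinuousLinearMap.proj_apply, smul_eq_mul, Pi.single_apply]
        by_cases hij : i = j
        · simp [hij]
        · simp [hij, Ne.symm hij]
    have htri : Matrix.BlockTriangular (LinearMap.toMatrix (Pi.basisFun ℝ (Fin r))
        (Pi.basisFun ℝ (Fin r)) ((Φ' t) : (Fin r → ℝ) →ₗ[ℝ] (Fin r → ℝ))) id := by
      intro i j hji
      rw [hM i j]
      have hii0 : i ≠ i0 := by
        intro hcon
        rw [hcon] at hji
        exact absurd hji (by simp [hi0, Fin.le_def, Fin.lt_def])
      rw [if_neg hii0, if_neg (by exact fun hcon => absurd hji (by simp [hcon]))]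
    rw [Matrix.det_of_upperTriangular htri]
    refine Finset.prod_congr rfl fun i _ => ?_
    rw [hM i i]
    by_cases hi : i = i0 <;> simp [hi]
  have hG : IntegrableOn (fun v : Fin r → ℝ => f (x * Real.exp (d * v i0))) (Φ '' s) := by
    have hsub : Φ '' s ⊆ Set.univ.pi fun i =>
        if i = i0 then Set.Icc 0 ((r:ℝ) * a) else Set.Icc 0 a := by
      rintro _ ⟨t, ht, rfl⟩
      intro i _
      have hlog : ∀ j, Real.log (t j) ∈ Set.Icc (0:ℝ) a := by
        intro j
        have h1 := (ht j (mem_univ j)).1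
        have h2 := (ht j (mem_univ j)).2
        constructor
        · exact Real.log_nonneg h1
        · exact Real.log_le_log (lt_of_lt_of_le one_pos h1) h2
      by_cases hi : i = i0
      · simp only [hΦ, hi, if_pos rfl]
        constructor
        · exact Finset.sum_nonneg fun j _ => (hlog j).1
        · calc ∑ j, Real.log (t j) ≤ ∑ _j : Fin r, a :=
                Finset.sum_le_sum fun j _ => (hlog j).2
            _ = (r:ℝ) * a := by simp [Finset.sum_const, mul_comm]
      · simp only [hΦ, if_neg hi]
        exact hlog i
    refine IntegrableOn.mono_set ?_ hsub
    set S : Fin r → Set ℝ := fun i => if i = i0 then Set.Icc 0 ((r:ℝ) * a) else Set.Icc 0 a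
      with hSdef
    set g : Fin r → ℝ → ℝ := fun i w => if i = i0 then f (x * Real.exp (d * w)) else 1
      with hgdef
    have heq : (fun v : Fin r → ℝ => f (x * Real.exp (d * v i0)))
        = fun v : Fin r → ℝ => ∏ i, g i (v i) := by
      funext v
      simp only [hgdef]
      rw [Finset.prod_ite_eq' Finset.univ i0
        (fun i => f (x * Real.exp (d * v i)))]
      simp
    rw [heq]
    refine aux_pi_prod_integrable S (fun i => ?_) g (fun i => ?_)
    · rw [hSdef]; dsimp only; split <;> exact measurableSet_Icc
    · by_cases hi : i = i0
      · simp only [hgdef, hSdef, if_pos hi]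
        exact aux_1d hf hx hd _
      · simp only [hgdef, hSdef, if_neg hi]
        exact integrableOn_const measure_Icc_lt_top.ne
  rw [integrableOn_image_iff_integrableOn_abs_det_fderiv_smul volume hsm hderiv hinj] at hG
  refine hG.congr_fun (fun t ht => ?_) hsm
  have hP : (0:ℝ) < ∏ i, t i := Finset.prod_pos fun i _ => hpos t ht i
  have h1 : (Φ t) i0 = Real.log (∏ i, t i) := by
    simp only [hΦ, if_pos rfl]
    rw [Real.log_prod fun j _ => (hpos t ht j).ne']
  have h2 : |(Φ' t).det| = ∏ i, (t i)⁻¹ := by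
    rw [hdet t ht, abs_of_pos (Finset.prod_pos fun i _ => inv_pos.2 (hpos t ht i))]
  beta_reduce
  rw [h2, h1, smul_eq_mul, Real.exp_eq_exp.mpr rfl]
  rw [show Real.exp (d * Real.log (∏ i, t i)) = (∏ i, t i) ^ d by
    rw [Real.rpow_def_of_pos hP, mul_comm]]
  ring


/-- `F_{r,h}(x) - f(x)
  = -(-1)^{-r} (log h)^{-r} ∫₁^h ⋯ ∫₁^h Δ^r_{(t₁⋯t_r)^{1/r}} f(x) dt₁/t₁ ⋯ dt_r/t_r`. -/
theorem stmt_2 (r : ℕ) (hr : 0 < r) (f : ℝ → ℝ)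
    (hf : LocallyIntegrableOn f (Set.Ioi 0) volume)
    (h : ℝ) (hh : 1 < h) (x : ℝ) (hx : 0 < x) :
    mellinSteklov r f h x - f x =
      -((-1 : ℝ) ^ (-(r : ℤ)) * Real.log h ^ (-(r : ℤ)) *
        ∫ t : Fin r → ℝ in Set.univ.pi fun _ => Set.Icc 1 h,
          logDiff r f ((∏ i, t i) ^ ((1 : ℝ) / (r : ℝ))) x * ∏ i, (t i)⁻¹) := by
  classical
  have hL : 0 < Real.log h := Real.log_pos hh
  set box : Set (Fin r → ℝ) := Set.univ.pi fun _ => Set.Icc 1 h with hboxdef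
  have hboxm : MeasurableSet box := MeasurableSet.univ_pi fun _ => measurableSet_Icc
  -- integrability of each piece
  have hFm : ∀ m ∈ Finset.Icc 1 r, IntegrableOn
      (fun t : Fin r → ℝ => f (x * (∏ i, t i) ^ ((m:ℝ)/(r:ℝ))) * ∏ i, (t i)⁻¹) box := by
    intro m hm
    have hm1 : 1 ≤ m := (Finset.mem_Icc.mp hm).1
    exact auxF hf hr hh hx (div_pos (by exact_mod_cast hm1) (by exact_mod_cast hr))
  have hW : IntegrableOn (fun t : Fin r → ℝ => ∏ i, (t i)⁻¹) box := by
    have := auxF (f := fun _ => (1:ℝ))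
      ((locallyIntegrable_const (1:ℝ)).locallyIntegrableOn _) hr hh hx (d := 1) one_pos
    simpa only [one_mul] using this
  have hWval : ∫ t in box, ∏ i, (t i)⁻¹ = Real.log h ^ r := by
    rw [hboxdef, aux_pi_prod_integral _ (fun _ => measurableSet_Icc) (fun _ v => v⁻¹)]
    have h1 : ∫ v in Set.Icc (1:ℝ) h, v⁻¹ = Real.log h := by
      rw [MeasureTheory.integral_Icc_eq_integral_Ioc,
        ← intervalIntegral.integral_of_le hh.le,
        integral_inv (by rw [Set.uIcc_of_le hh.le]; intro hc; linarith [hc.1]), div_one]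
    simp [h1]
  set MI : (Fin r → ℝ) → ℝ := fun t =>
      (∑ m ∈ Finset.Icc 1 r,
        (-1 : ℝ) ^ ((r : ℤ) - (m : ℤ) + 1) * (r.choose m : ℝ) *
          f (x * (∏ i, t i) ^ ((m : ℝ) / (r : ℝ)))) * ∏ i, (t i)⁻¹ with hMIdef
  have hMI : IntegrableOn MI box := by
    have hMIeq : MI = fun t => ∑ m ∈ Finset.Icc 1 r,
        ((-1 : ℝ) ^ ((r : ℤ) - (m : ℤ) + 1) * (r.choose m : ℝ)) *
          (f (x * (∏ i, t i) ^ ((m : ℝ) / (r : ℝ))) * ∏ i, (t i)⁻¹) := by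
      funext t
      rw [hMIdef]
      dsimp only
      rw [Finset.sum_mul]
      exact Finset.sum_congr rfl fun m _ => by ring
    rw [hMIeq]
    exact integrable_finset_sum _ fun m hm => (hFm m hm).const_mul _
  -- the pointwise identity
  have key : ∀ t ∈ box, logDiff r f ((∏ i, t i) ^ ((1:ℝ)/(r:ℝ))) x * ∏ i, (t i)⁻¹
      = ((-1:ℝ)^r * f x) * ∏ i, (t i)⁻¹ - MI t := by
    intro t ht
    have hP : (0:ℝ) < ∏ i, t i :=
      Finset.prod_pos fun i _ => lt_of_lt_of_le one_pos ((ht i (mem_univ i)).1)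
    have hpow : ∀ j : ℕ, ((∏ i, t i) ^ ((1:ℝ)/(r:ℝ))) ^ j
        = (∏ i, t i) ^ ((j:ℝ)/(r:ℝ)) := by
      intro j
      rw [← Real.rpow_natCast ((∏ i, t i) ^ ((1:ℝ)/(r:ℝ))) j, ← Real.rpow_mul hP.le,
        div_mul_eq_mul_div, one_mul]
    have e1 : logDiff r f ((∏ i, t i) ^ ((1:ℝ)/(r:ℝ))) x
        = (-1:ℝ)^r * f x - ∑ m ∈ Finset.Icc 1 r,
            (-1 : ℝ) ^ ((r : ℤ) - (m : ℤ) + 1) * (r.choose m : ℝ) *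
              f (x * (∏ i, t i) ^ ((m : ℝ) / (r : ℝ))) := by
      unfold logDiff
      simp_rw [hpow]
      rw [Finset.sum_range_succ']
      have hterm0 : (-1 : ℝ) ^ (r - 0) * (r.choose 0 : ℝ)
          * f (x * (∏ i, t i) ^ (((0:ℕ):ℝ)/(r:ℝ))) = (-1:ℝ)^r * f x := by
        simp
      rw [hterm0]
      have hsum2 : ∑ m ∈ Finset.Icc 1 r,
          (-1 : ℝ) ^ ((r : ℤ) - (m : ℤ) + 1) * (r.choose m : ℝ) *
            f (x * (∏ i, t i) ^ ((m : ℝ) / (r : ℝ)))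
          = ∑ j ∈ Finset.range r,
            -((-1 : ℝ) ^ (r - (j+1)) * (r.choose (j+1) : ℝ) *
              f (x * (∏ i, t i) ^ (((j+1:ℕ):ℝ) / (r : ℝ)))) := by
        rw [← Finset.Ico_add_one_right_eq_Icc, Finset.sum_Ico_eq_sum_range]
        have hrr : r + 1 - 1 = r := by omega
        rw [hrr]
        refine Finset.sum_congr rfl fun j hj => ?_
        have hj1 : j + 1 ≤ r := by
          have := Finset.mem_range.mp hj; omega
        have hsign : (-1 : ℝ) ^ ((r : ℤ) - ((1 + j : ℕ) : ℤ) + 1)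
            = -(-1 : ℝ) ^ (r - (j + 1)) := by
          have hcast : (r : ℤ) - ((1 + j : ℕ) : ℤ) + 1 = ((r - (j+1) + 1 : ℕ) : ℤ) := by
            push_cast [Nat.cast_sub hj1]
            ring
          rw [hcast, zpow_natCast, pow_succ]
          ring
        rw [hsign]
        have : (1 + j : ℕ) = (j + 1 : ℕ) := by omega
        rw [this]
        push_cast
        ring
      rw [hsum2, Finset.sum_neg_distrib]
      ring
    rw [e1, sub_mul, hMIdef]
  have hsplit : ∫ t in box, logDiff r f ((∏ i, t i) ^ ((1:ℝ)/(r:ℝ))) x * ∏ i, (t i)⁻¹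
      = (-1:ℝ)^r * f x * Real.log h ^ r - ∫ t in box, MI t := by
    rw [setIntegral_congr_fun hboxm key, integral_sub (hW.const_mul _) hMI,
      MeasureTheory.integral_const_mul, hWval]
  have hmel : mellinSteklov r f h x = ((-Real.log h)^r)⁻¹ * ∫ t in box, MI t := rfl
  rw [hmel, hsplit]
  have hE : ((-1:ℝ)^r)⁻¹ = (-1)^r := by
    rw [← inv_pow, inv_neg_one]
  have h1 : ((-1:ℝ)^r) * ((-1)^r) = 1 := by
    rw [← pow_add]; exact Even.neg_one_pow ⟨r, rfl⟩
  have hLr : (Real.log h)^r ≠ 0 := pow_ne_zero _ hL.ne'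
  rw [zpow_neg, zpow_neg, zpow_natCast, zpow_natCast, neg_pow, mul_inv, hE]
  field_simp
  linear_combination f x * Real.log h ^ r * h1
end

section
/- Let χ : ℝ₊ → ℝ be a continuous function such that M₀(χ) := sup_{u ∈ ℝ₊} Σ_{k ∈ ℤ} |χ(e^{−k} u)| < ∞, let r ∈ ℕ, w > 0, and let f : ℝ₊ → ℝ be a bounded measurable function. Then for every x ∈ ℝ₊, the Mellin–Steklov exponential sampling operator of order r satisfies |(E_{w,r}^χ f)(x)| ≤ (2^r − 1) M₀(χ) ‖f‖_∞, where ‖f‖_∞ is the sup-norm of f on ℝ₊. -/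
open MeasureTheory Filter Set

lemma choose_sum_Icc (r : ℕ) : ∑ m ∈ Finset.Icc 1 r, (r.choose m : ℝ) = 2 ^ r - 1 := by
  have h0 : Finset.range (r + 1) = insert 0 (Finset.Icc 1 r) := by
    ext m; simp [Nat.lt_succ_iff, Finset.mem_insert]; omega
  have h1 : ∑ m ∈ Finset.range (r + 1), (r.choose m : ℝ) = 2 ^ r := by
    exact_mod_cast congrArg (Nat.cast : ℕ → ℝ) (Nat.sum_range_choose r)
  rw [h0, Finset.sum_insert (by simp)] at h1
  simp at h1
  linarith

lemma mellinSteklov_abs_le (r : ℕ) (f : ℝ → ℝ) (S : ℝ) (hS : 0 ≤ S)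
    (hf : ∀ y : ℝ, 0 < y → |f y| ≤ S) {h : ℝ} (h1 : 1 < h) {x : ℝ} (hx : 0 < x) :
    |mellinSteklov r f h x| ≤ ((2:ℝ) ^ r - 1) * S := by
  set L := Real.log h with hLdef
  have hL0 : 0 < L := Real.log_pos h1
  have hh0 : 0 < h := lt_trans one_pos h1
  set C : ℝ := ((2:ℝ) ^ r - 1) * S with hCdef
  have h2r : (1:ℝ) ≤ 2 ^ r := one_le_pow₀ (by norm_num)
  have hC0 : 0 ≤ C := mul_nonneg (by linarith) hS
  set g : ℝ → ℝ := (Set.Icc 1 h).indicator (fun t => t⁻¹) with hgdef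
  have hgcont : ContinuousOn (fun t : ℝ => t⁻¹) (Set.Icc 1 h) :=
    continuousOn_id.inv₀ (fun t ht => ne_of_gt (lt_of_lt_of_le one_pos ht.1))
  have hg_int : Integrable g := by
    rw [hgdef, integrable_indicator_iff measurableSet_Icc]
    exact hgcont.integrableOn_Icc
  have hg_val : ∫ t, g t = L := by
    rw [hgdef, MeasureTheory.integral_indicator measurableSet_Icc,
      MeasureTheory.integral_Icc_eq_integral_Ioc,
      ← intervalIntegral.integral_of_le h1.le, integral_inv_of_pos one_pos hh0, div_one]
  set P : Set (Fin r → ℝ) := Set.univ.pi fun _ => Set.Icc 1 h with hPdef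
  have hPm : MeasurableSet P := MeasurableSet.univ_pi fun _ => measurableSet_Icc
  have hind : (P.indicator fun t : Fin r → ℝ => ∏ i, (t i)⁻¹) = fun t => ∏ i, g (t i) := by
    funext t
    by_cases ht : t ∈ P
    · rw [Set.indicator_of_mem ht]
      exact Finset.prod_congr rfl fun i _ =>
        (Set.indicator_of_mem (ht i (Set.mem_univ i)) _).symm
    · rw [Set.indicator_of_notMem ht]
      simp only [hPdef, Set.mem_pi, Set.mem_univ, forall_true_left, not_forall] at ht
      obtain ⟨i, hi⟩ := ht
      exact (Finset.prod_eq_zero (Finset.mem_univ i) (Set.indicator_of_notMem hi _)).symm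
  have hprod_int : IntegrableOn (fun t : Fin r → ℝ => ∏ i, (t i)⁻¹) P := by
    refine (integrable_indicator_iff hPm).mp ?_
    rw [hind]
    exact Integrable.fintype_prod (fun _ => hg_int)
  have hprod_val : ∫ t in P, ∏ i, (t i)⁻¹ = L ^ r := by
    rw [← MeasureTheory.integral_indicator hPm, hind]
    show ∫ t, ∏ i, g (t i) ∂(Measure.pi fun _ => volume) = L ^ r
    rw [MeasureTheory.integral_fintype_prod_eq_pow g, hg_val, Fintype.card_fin]
  set F : (Fin r → ℝ) → ℝ := fun t =>
    (∑ m ∈ Finset.Icc 1 r, (-1 : ℝ) ^ ((r : ℤ) - (m : ℤ) + 1) * (r.choose m : ℝ) *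
      f (x * (∏ i, t i) ^ ((m : ℝ) / (r : ℝ)))) * ∏ i, (t i)⁻¹ with hFdef
  have hbound_int : Integrable (fun t : Fin r → ℝ => C * ∏ i, (t i)⁻¹)
      (volume.restrict P) := hprod_int.const_mul C
  have hae : ∀ᵐ t ∂(volume.restrict P), ‖F t‖ ≤ C * ∏ i, (t i)⁻¹ := by
    refine (ae_restrict_mem hPm).mono fun t ht => ?_
    have hti : ∀ i, 1 ≤ t i := fun i => (ht i (Set.mem_univ i)).1
    have htpos : ∀ i, 0 < t i := fun i => lt_of_lt_of_le one_pos (hti i)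
    have hppos : 0 < ∏ i, t i := Finset.prod_pos fun i _ => htpos i
    have hpinv : 0 ≤ ∏ i, (t i)⁻¹ :=
      Finset.prod_nonneg fun i _ => inv_nonneg.2 (htpos i).le
    have hsum_le : |∑ m ∈ Finset.Icc 1 r, (-1 : ℝ) ^ ((r : ℤ) - (m : ℤ) + 1) *
        (r.choose m : ℝ) * f (x * (∏ i, t i) ^ ((m : ℝ) / (r : ℝ)))| ≤ C := by
      calc |∑ m ∈ Finset.Icc 1 r, (-1 : ℝ) ^ ((r : ℤ) - (m : ℤ) + 1) *
            (r.choose m : ℝ) * f (x * (∏ i, t i) ^ ((m : ℝ) / (r : ℝ)))|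
          ≤ ∑ m ∈ Finset.Icc 1 r, |(-1 : ℝ) ^ ((r : ℤ) - (m : ℤ) + 1) *
            (r.choose m : ℝ) * f (x * (∏ i, t i) ^ ((m : ℝ) / (r : ℝ)))| :=
            Finset.abs_sum_le_sum_abs _ _
        _ ≤ ∑ m ∈ Finset.Icc 1 r, (r.choose m : ℝ) * S := by
            refine Finset.sum_le_sum fun m _ => ?_
            have hy : 0 < x * (∏ i, t i) ^ ((m : ℝ) / (r : ℝ)) :=
              mul_pos hx (Real.rpow_pos_of_pos hppos _)
            have h1' : |(-1 : ℝ) ^ ((r : ℤ) - (m : ℤ) + 1)| = 1 := by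
              rcases Int.even_or_odd ((r : ℤ) - (m : ℤ) + 1) with he | ho
              · rw [he.neg_one_zpow, abs_one]
              · rw [ho.neg_one_zpow, abs_neg, abs_one]
            rw [abs_mul, abs_mul, h1', one_mul, Nat.abs_cast]
            exact mul_le_mul_of_nonneg_left (hf _ hy) (Nat.cast_nonneg _)
        _ = C := by rw [← Finset.sum_mul, choose_sum_Icc]
    rw [Real.norm_eq_abs, hFdef, abs_mul, abs_of_nonneg hpinv]
    exact mul_le_mul_of_nonneg_right hsum_le hpinv
  have hI : |∫ t in P, F t| ≤ C * L ^ r := by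
    calc |∫ t in P, F t| ≤ ∫ t in P, C * ∏ i, (t i)⁻¹ := by
          rw [← Real.norm_eq_abs]
          exact norm_integral_le_of_norm_le hbound_int hae
      _ = C * L ^ r := by rw [MeasureTheory.integral_const_mul, hprod_val]
  have hcoef : |(((-L) ^ r)⁻¹ : ℝ)| = (L ^ r)⁻¹ := by
    rw [abs_inv, abs_pow, abs_neg, abs_of_pos hL0]
  have hLr : (0:ℝ) < L ^ r := pow_pos hL0 r
  rw [mellinSteklov, abs_mul, ← hLdef, hcoef]
  calc (L ^ r)⁻¹ * |∫ t in P, F t| ≤ (L ^ r)⁻¹ * (C * L ^ r) :=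
        mul_le_mul_of_nonneg_left hI (inv_nonneg.2 hLr.le)
    _ = C := by field_simp

/-- `|(E_{w,r}^χ f)(x)| ≤ (2^r - 1) M₀(χ) ‖f‖_∞`. -/
theorem stmt_5 (χ : ℝ → ℝ) (hχc : ContinuousOn χ (Set.Ioi 0))
    (hsum : ∀ u : ℝ, 0 < u → Summable fun k : ℤ => |χ (Real.exp (-(k : ℝ)) * u)|)
    (hbdd : BddAbove (Set.range fun u : Set.Ioi (0:ℝ) =>
      ∑' k : ℤ, |χ (Real.exp (-(k : ℝ)) * (u : ℝ))|))
    (r : ℕ) (hr : 0 < r) (w : ℝ) (hw : 0 < w) (f : ℝ → ℝ)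
    (hmeas : Measurable f) (hfbdd : ∃ C, ∀ x : ℝ, 0 < x → |f x| ≤ C)
    (x : ℝ) (hx : 0 < x) :
    |samplingOp χ r f w x| ≤ ((2 : ℝ) ^ r - 1) * M0 χ * supNorm f := by
  obtain ⟨C0, hC0⟩ := hfbdd
  have hbS : BddAbove (Set.range fun y : Set.Ioi (0:ℝ) => |f (y : ℝ)|) := by
    refine ⟨max C0 0, ?_⟩
    rintro _ ⟨y, rfl⟩
    exact le_trans (hC0 y y.2) (le_max_left _ _)
  set S := supNorm f with hSdef
  have hfS : ∀ y : ℝ, 0 < y → |f y| ≤ S := fun y hy => le_ciSup hbS ⟨y, hy⟩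
  have hS0 : 0 ≤ S := Real.iSup_nonneg fun y => abs_nonneg _
  have h2r : (1:ℝ) ≤ 2 ^ r := one_le_pow₀ (by norm_num)
  set C : ℝ := ((2:ℝ) ^ r - 1) * S with hCdef
  have hC0' : 0 ≤ C := mul_nonneg (by linarith) hS0
  have hh1 : (1:ℝ) < Real.exp (1 / w) := by
    rw [Real.one_lt_exp_iff]
    positivity
  have hF : ∀ k : ℤ, |mellinSteklov r f (Real.exp (1 / w)) (Real.exp ((k : ℝ) / w))| ≤ C :=
    fun k => mellinSteklov_abs_le r f S hS0 hfS hh1 (Real.exp_pos _)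
  have hu : 0 < x ^ w := Real.rpow_pos_of_pos hx w
  have hχs : Summable fun k : ℤ => |χ (Real.exp (-(k : ℝ)) * x ^ w)| := hsum _ hu
  have habs : ∀ k : ℤ, |χ (Real.exp (-(k : ℝ)) * x ^ w) *
      mellinSteklov r f (Real.exp (1 / w)) (Real.exp ((k : ℝ) / w))| ≤
      |χ (Real.exp (-(k : ℝ)) * x ^ w)| * C := fun k => by
    rw [abs_mul]
    exact mul_le_mul_of_nonneg_left (hF k) (abs_nonneg _)
  have hsum2 : Summable fun k : ℤ => |χ (Real.exp (-(k : ℝ)) * x ^ w) *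
      mellinSteklov r f (Real.exp (1 / w)) (Real.exp ((k : ℝ) / w))| :=
    Summable.of_nonneg_of_le (fun k => abs_nonneg _) habs (hχs.mul_right C)
  have hM0 : ∑' k : ℤ, |χ (Real.exp (-(k : ℝ)) * x ^ w)| ≤ M0 χ := by
    exact le_ciSup hbdd (⟨x ^ w, hu⟩ : Set.Ioi (0:ℝ))
  calc |samplingOp χ r f w x|
      ≤ ∑' k : ℤ, |χ (Real.exp (-(k : ℝ)) * x ^ w) *
        mellinSteklov r f (Real.exp (1 / w)) (Real.exp ((k : ℝ) / w))| := by
        unfold samplingOp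
        have h' : Summable fun k : ℤ => ‖χ (Real.exp (-(k : ℝ)) * x ^ w) *
            mellinSteklov r f (Real.exp (1 / w)) (Real.exp ((k : ℝ) / w))‖ := by
          simpa only [Real.norm_eq_abs] using hsum2
        simpa only [Real.norm_eq_abs] using norm_tsum_le_tsum_norm h'
    _ ≤ ∑' k : ℤ, |χ (Real.exp (-(k : ℝ)) * x ^ w)| * C :=
        hsum2.tsum_le_tsum habs (hχs.mul_right C)
    _ = (∑' k : ℤ, |χ (Real.exp (-(k : ℝ)) * x ^ w)|) * C := tsum_mul_right
    _ ≤ M0 χ * C := mul_le_mul_of_nonneg_right hM0 hC0'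
    _ = ((2 : ℝ) ^ r - 1) * M0 χ * S := by rw [hCdef]; ring
end

section
/- Let χ : ℝ₊ → ℝ be a kernel in the class φ, let r ∈ ℕ, and let f : ℝ₊ → ℝ be a bounded measurable function. Then for every point x ∈ ℝ₊ at which f is continuous, lim_{w → ∞} (E_{w,r}^χ f)(x) = f(x). -/
open MeasureTheory Filter Set

lemma aux_range_insert (r : ℕ) : Finset.range (r+1) = insert 0 (Finset.Icc 1 r) := by
  ext m; simp [Nat.lt_succ_iff]; omega

lemma aux_sum_choose (r : ℕ) : ∑ m ∈ Finset.Icc 1 r, (r.choose m : ℝ) = 2^r - 1 := by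
  have h1 : (∑ m ∈ Finset.range (r+1), (r.choose m : ℝ)) = 2^r := by
    exact_mod_cast Nat.sum_range_choose r
  rw [aux_range_insert, Finset.sum_insert (by simp)] at h1
  simp at h1
  linarith

lemma aux_coef (r m : ℕ) : (-1:ℝ)^((r:ℤ)-(m:ℤ)+1) = -((-1:ℝ)^r * (-1:ℝ)^m) := by
  have h1 : ((r:ℤ)-(m:ℤ)+1) = (r:ℤ) + (-(m:ℤ)) + 1 := by ring
  rw [h1, zpow_add₀ (by norm_num : (-1:ℝ) ≠ 0), zpow_add₀ (by norm_num : (-1:ℝ) ≠ 0),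
    zpow_neg, zpow_natCast, zpow_natCast, zpow_one, ← inv_pow]
  norm_num

lemma aux_coef_abs (r m : ℕ) : |(-1:ℝ)^((r:ℤ)-(m:ℤ)+1) * (r.choose m : ℝ)| = (r.choose m : ℝ) := by
  have h1 : |(-1:ℝ)^((r:ℤ)-(m:ℤ)+1)| = 1 := by
    rw [aux_coef]
    simp [abs_mul]
  rw [abs_mul, h1, one_mul, abs_of_nonneg (Nat.cast_nonneg _)]

lemma aux_coef_sum (r : ℕ) (hr : 0 < r) :
    ∑ m ∈ Finset.Icc 1 r, (-1:ℝ)^((r:ℤ)-(m:ℤ)+1) * (r.choose m : ℝ) = (-1:ℝ)^r := by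
  have halt : ∑ m ∈ Finset.range (r+1), (-1:ℝ)^m * (r.choose m : ℝ) = 0 := by
    exact_mod_cast congrArg (Int.cast : ℤ → ℝ) (Int.alternating_sum_range_choose_of_ne hr.ne')
  rw [aux_range_insert, Finset.sum_insert (by simp)] at halt
  simp at halt
  calc ∑ m ∈ Finset.Icc 1 r, (-1:ℝ)^((r:ℤ)-(m:ℤ)+1) * (r.choose m : ℝ)
      = ∑ m ∈ Finset.Icc 1 r, -((-1:ℝ)^r * ((-1:ℝ)^m * (r.choose m : ℝ))) := by
        refine Finset.sum_congr rfl fun m _ => ?_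
        rw [aux_coef]; ring
    _ = -((-1:ℝ)^r * ∑ m ∈ Finset.Icc 1 r, (-1:ℝ)^m * (r.choose m : ℝ)) := by
        rw [Finset.mul_sum, ← Finset.sum_neg_distrib]
    _ = (-1:ℝ)^r := by
        have h2 : ∑ m ∈ Finset.Icc 1 r, (-1:ℝ)^m * (r.choose m : ℝ) = -1 := by linarith
        rw [h2]; ring

lemma steklov_bound (r : ℕ) (hr : 0 < r) (f : ℝ → ℝ) (hmeas : Measurable f)
    {h y c ε : ℝ} (hh : 1 < h) (hy : 0 < y) (hε : 0 ≤ ε)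
    (hf : ∀ m ∈ Finset.Icc 1 r, ∀ t : Fin r → ℝ, (∀ i, t i ∈ Set.Icc 1 h) →
      |f (y * (∏ i, t i) ^ ((m:ℝ)/(r:ℝ))) - c| ≤ ε) :
    |mellinSteklov r f h y - c| ≤ (2^r - 1) * ε := by
  have hL : 0 < Real.log h := Real.log_pos hh
  set L : ℝ := Real.log h with hLdef
  set box : Set (Fin r → ℝ) := Set.univ.pi fun _ => Set.Icc 1 h with hbox
  have mbox : MeasurableSet box := MeasurableSet.univ_pi fun _ => measurableSet_Icc
  have hmem : ∀ t : Fin r → ℝ, t ∈ box ↔ ∀ i, t i ∈ Set.Icc 1 h := by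
    intro t
    simp only [hbox, Set.mem_univ_pi]
  set P : (Fin r → ℝ) → ℝ := fun t => ∏ i, (t i)⁻¹ with hP
  have hPnn : ∀ t ∈ box, 0 ≤ P t := by
    intro t ht
    exact Finset.prod_nonneg fun i _ => inv_nonneg.mpr
      (le_trans zero_le_one ((hmem t).1 ht i).1)
  set g : ℝ → ℝ := Set.indicator (Set.Icc 1 h) (fun z => z⁻¹) with hg
  have hg_int : Integrable g := by
    rw [hg, integrable_indicator_iff measurableSet_Icc]
    apply ContinuousOn.integrableOn_compact isCompact_Icc
    exact ContinuousOn.inv₀ continuousOn_id fun z hz => ne_of_gt (lt_of_lt_of_le one_pos hz.1)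
  have hg_val : ∫ z, g z = L := by
    rw [hg, integral_indicator measurableSet_Icc, MeasureTheory.integral_Icc_eq_integral_Ioc,
      ← intervalIntegral.integral_of_le hh.le, integral_inv ?_]
    · simp [hLdef]
    · rw [Set.uIcc_of_le hh.le]
      intro h0
      have := h0.1
      linarith
  have hP_ind : box.indicator P = fun t => ∏ i, g (t i) := by
    funext t
    by_cases ht : t ∈ box
    · rw [Set.indicator_of_mem ht]
      exact Finset.prod_congr rfl fun i _ => (Set.indicator_of_mem ((hmem t).1 ht i) _).symm
    · rw [Set.indicator_of_notMem ht]
      obtain ⟨i, hi⟩ : ∃ i, t i ∉ Set.Icc 1 h := by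
        by_contra hcon; push_neg at hcon; exact ht ((hmem t).2 hcon)
      exact (Finset.prod_eq_zero (Finset.mem_univ i) (Set.indicator_of_notMem hi _)).symm
  have hP_int : IntegrableOn P box := by
    rw [← integrable_indicator_iff mbox, hP_ind]
    exact MeasureTheory.Integrable.fintype_prod (f := fun _ : Fin r => g) fun _ => hg_int
  have hP_val : ∫ t in box, P t = L ^ r := by
    rw [← integral_indicator mbox, hP_ind, MeasureTheory.volume_pi,
      MeasureTheory.integral_fintype_prod_eq_pow (ι := Fin r) g, hg_val]
    simp
  set Φ : ℕ → (Fin r → ℝ) → ℝ := fun m t => f (y * (∏ i, t i) ^ ((m:ℝ)/(r:ℝ))) with hΦ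
  have hΦ_meas : ∀ m, Measurable (Φ m) := by
    intro m
    exact hmeas.comp (Measurable.const_mul
      (Measurable.pow_const (Finset.measurable_prod _ fun i _ => measurable_pi_apply i) _) y)
  set a : ℕ → ℝ := fun m => (-1:ℝ)^((r:ℤ)-(m:ℤ)+1) * (r.choose m : ℝ) with ha
  set K : ℝ := (2:ℝ)^r - 1 with hKdef
  have hKsum : ∑ m ∈ Finset.Icc 1 r, (r.choose m : ℝ) = K := aux_sum_choose r
  have hK0 : 0 ≤ K := by
    rw [hKdef]
    have : (1:ℝ) ≤ 2^r := one_le_pow₀ (by norm_num : (1:ℝ) ≤ 2)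
    linarith
  have hΦbound : ∀ t ∈ box, |∑ m ∈ Finset.Icc 1 r, a m * (Φ m t - c)| ≤ K * ε := by
    intro t ht
    calc |∑ m ∈ Finset.Icc 1 r, a m * (Φ m t - c)|
        ≤ ∑ m ∈ Finset.Icc 1 r, |a m * (Φ m t - c)| := Finset.abs_sum_le_sum_abs _ _
      _ ≤ ∑ m ∈ Finset.Icc 1 r, (r.choose m : ℝ) * ε := by
          refine Finset.sum_le_sum fun m hm => ?_
          rw [abs_mul, ha]
          simp only []
          rw [aux_coef_abs]
          exact mul_le_mul_of_nonneg_left (hf m hm t ((hmem t).1 ht)) (Nat.cast_nonneg _)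
      _ = K * ε := by rw [← Finset.sum_mul, hKsum]
  have hGbound : ∀ t ∈ box, |∑ m ∈ Finset.Icc 1 r, a m * Φ m t| ≤ K * (|c| + ε) := by
    intro t ht
    calc |∑ m ∈ Finset.Icc 1 r, a m * Φ m t|
        ≤ ∑ m ∈ Finset.Icc 1 r, |a m * Φ m t| := Finset.abs_sum_le_sum_abs _ _
      _ ≤ ∑ m ∈ Finset.Icc 1 r, (r.choose m : ℝ) * (|c| + ε) := by
          refine Finset.sum_le_sum fun m hm => ?_
          rw [abs_mul, ha]
          simp only []
          rw [aux_coef_abs]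
          refine mul_le_mul_of_nonneg_left ?_ (Nat.cast_nonneg _)
          have h1 := hf m hm t ((hmem t).1 ht)
          have h2 := abs_sub_abs_le_abs_sub (Φ m t) c
          have := abs_abs_sub_abs_le_abs_sub (Φ m t) c
          calc |Φ m t| = |Φ m t - c + c| := by ring_nf
            _ ≤ |Φ m t - c| + |c| := abs_add_le _ _
            _ ≤ |c| + ε := by linarith
      _ = K * (|c| + ε) := by rw [← Finset.sum_mul, hKsum]
  set G : (Fin r → ℝ) → ℝ := fun t => (∑ m ∈ Finset.Icc 1 r, a m * Φ m t) * P t with hG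
  set H : (Fin r → ℝ) → ℝ := fun t => (∑ m ∈ Finset.Icc 1 r, a m * (Φ m t - c)) * P t with hH
  have hPmeas : Measurable P := Finset.measurable_prod _ fun i _ => (measurable_pi_apply i).inv
  have hG_meas : Measurable G :=
    (Finset.measurable_sum _ fun m _ => ((hΦ_meas m).const_mul (a m))).mul hPmeas
  have hH_meas : Measurable H :=
    (Finset.measurable_sum _ fun m _ => (((hΦ_meas m).sub measurable_const).const_mul (a m))).mul
      hPmeas
  have hH_int : IntegrableOn H box := by
    refine Integrable.mono' (hP_int.const_mul (K * ε)) hH_meas.aestronglyMeasurable.restrict ?_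
    rw [ae_restrict_iff' mbox]
    filter_upwards with t ht
    rw [Real.norm_eq_abs, hH]
    simp only []
    rw [abs_mul, abs_of_nonneg (hPnn t ht)]
    exact mul_le_mul_of_nonneg_right (hΦbound t ht) (hPnn t ht)
  have hG_int : IntegrableOn G box := by
    refine Integrable.mono' (hP_int.const_mul (K * (|c| + ε)))
      hG_meas.aestronglyMeasurable.restrict ?_
    rw [ae_restrict_iff' mbox]
    filter_upwards with t ht
    rw [Real.norm_eq_abs, hG]
    simp only []
    rw [abs_mul, abs_of_nonneg (hPnn t ht)]
    exact mul_le_mul_of_nonneg_right (hGbound t ht) (hPnn t ht)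
  have hsplit : ∀ t, H t = G t - ((-1:ℝ)^r * c) * P t := by
    intro t
    rw [hH, hG]
    simp only []
    have h1 : ∑ m ∈ Finset.Icc 1 r, a m * (Φ m t - c)
        = (∑ m ∈ Finset.Icc 1 r, a m * Φ m t) - (∑ m ∈ Finset.Icc 1 r, a m) * c := by
      rw [Finset.sum_mul, ← Finset.sum_sub_distrib]
      exact Finset.sum_congr rfl fun m _ => by ring
    have h2 : ∑ m ∈ Finset.Icc 1 r, a m = (-1:ℝ)^r := aux_coef_sum r hr
    rw [h1, h2, sub_mul]
  have hint_eq : ∫ t in box, H t = (∫ t in box, G t) - (-1:ℝ)^r * c * L^r := by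
    calc ∫ t in box, H t = ∫ t in box, (G t - ((-1:ℝ)^r * c) * P t) := by
          exact integral_congr_ae (Filter.Eventually.of_forall fun t => hsplit t)
      _ = (∫ t in box, G t) - ∫ t in box, ((-1:ℝ)^r * c) * P t :=
          integral_sub hG_int (hP_int.const_mul _)
      _ = (∫ t in box, G t) - (-1:ℝ)^r * c * L^r := by
          rw [integral_const_mul, hP_val]
  have hne : ((-L):ℝ)^r ≠ 0 := pow_ne_zero _ (neg_ne_zero.mpr hL.ne')
  have hmdef : mellinSteklov r f h y = ((-L)^r)⁻¹ * ∫ t in box, G t := rfl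
  have hmells : mellinSteklov r f h y - c = ((-L)^r)⁻¹ * ∫ t in box, H t := by
    rw [hmdef, hint_eq, mul_sub]
    have h1 : ((-1:ℝ)^r * c * L^r) = (-L)^r * c := by rw [neg_pow]; ring
    rw [h1, ← mul_assoc, inv_mul_cancel₀ hne, one_mul]
  have habsint : |∫ t in box, H t| ≤ (K * ε) * L^r := by
    have h0 : |∫ t in box, H t| ≤ ∫ t in box, |H t| := by
      simpa [Real.norm_eq_abs] using
        norm_integral_le_integral_norm (μ := volume.restrict box) H
    have h1 : ∫ t in box, |H t| ≤ ∫ t in box, (K * ε) * P t := by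
      refine setIntegral_mono_on hH_int.abs (hP_int.const_mul _) mbox fun t ht => ?_
      rw [hH]
      simp only []
      rw [abs_mul, abs_of_nonneg (hPnn t ht)]
      exact mul_le_mul_of_nonneg_right (hΦbound t ht) (hPnn t ht)
    have h2 : ∫ t in box, (K * ε) * P t = (K * ε) * L^r := by
      rw [integral_const_mul, hP_val]
    linarith
  rw [hmells, abs_mul, abs_inv, abs_pow, abs_neg, abs_of_pos hL]
  have hLpos : (0:ℝ) < L^r := pow_pos hL r
  calc (L^r)⁻¹ * |∫ t in box, H t| ≤ (L^r)⁻¹ * ((K * ε) * L^r) :=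
        mul_le_mul_of_nonneg_left habsint (inv_nonneg.mpr hLpos.le)
    _ = K * ε := by field_simp

/-- pointwise convergence of `E_{w,r}^χ f` at every point of continuity. -/
theorem stmt_6 (χ : ℝ → ℝ) (hχ : IsKernel χ) (r : ℕ) (hr : 0 < r)
    (f : ℝ → ℝ) (hmeas : Measurable f) (hbdd : ∃ C, ∀ y : ℝ, 0 < y → |f y| ≤ C)
    (x : ℝ) (hx : 0 < x) (hcont : ContinuousWithinAt f (Set.Ioi 0) x) :
    Tendsto (fun w => samplingOp χ r f w x) atTop (nhds (f x)) := by
  obtain ⟨C₀, hC₀⟩ := hbdd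
  set C : ℝ := max C₀ 0 with hCdef
  have hC : ∀ y : ℝ, 0 < y → |f y| ≤ C := fun y hy => le_trans (hC₀ y hy) (le_max_left _ _)
  have hC0 : 0 ≤ C := le_max_right _ _
  set K : ℝ := (2:ℝ)^r - 1 with hKdef
  have h2r : (1:ℝ) ≤ 2^r := one_le_pow₀ (by norm_num)
  have hK0 : 0 ≤ K := by rw [hKdef]; linarith
  set M : ℝ := ⨆ u : Set.Ioi (0:ℝ), ∑' k : ℤ, |χ (Real.exp (-(k:ℝ)) * (u:ℝ))| with hMdef
  have hM : ∀ u : ℝ, 0 < u → ∑' k : ℤ, |χ (Real.exp (-(k:ℝ)) * u)| ≤ M := fun u hu =>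
    le_ciSup hχ.m0_bdd (⟨u, hu⟩ : Set.Ioi (0:ℝ))
  have hM0 : 0 ≤ M := le_trans (tsum_nonneg fun k => abs_nonneg _) (hM 1 one_pos)
  clear_value C K M
  rw [Metric.tendsto_atTop]
  intro ε hε
  set B : ℝ := K * (M + 2*C) + 1 with hBdef
  have hB : 0 < B := by rw [hBdef]; nlinarith
  set ε' : ℝ := ε / (2 * B) with hε'def
  have hε' : 0 < ε' := by rw [hε'def]; exact div_pos hε (by linarith)
  clear_value B ε'
  obtain ⟨δ, hδ0, hδ⟩ := Metric.continuousWithinAt_iff.mp hcont ε' hε'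
  obtain ⟨γ₀, hγ₀⟩ := Filter.eventually_atTop.mp (hχ.decay.eventually_lt_const hε')
  set γ : ℝ := max γ₀ 0 with hγdef
  have hγ0 : 0 ≤ γ := le_max_right _ _
  have hτ : (⨆ u : Set.Ioi (0:ℝ),
      ∑' k : {k : ℤ // γ < |(k : ℝ) - Real.log (u : ℝ)|},
        |χ (Real.exp (-((k : ℤ) : ℝ)) * (u : ℝ))|) < ε' := hγ₀ γ (le_max_left _ _)
  clear_value γ
  have hlim : Tendsto (fun w : ℝ => x * (Real.exp ((γ + r)/w) - 1)) atTop (nhds 0) := by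
    have h1 : Tendsto (fun w : ℝ => (γ + r)/w) atTop (nhds 0) :=
      tendsto_const_nhds.div_atTop tendsto_id
    have h2 := (Real.continuous_exp.tendsto 0).comp h1
    rw [Real.exp_zero] at h2
    have h3 : Tendsto (fun w : ℝ => Real.exp ((γ + r)/w) - 1) atTop (nhds 0) := by
      simpa using h2.sub_const 1
    simpa using h3.const_mul x
  obtain ⟨W, hW⟩ := Filter.eventually_atTop.mp
    ((eventually_ge_atTop (1:ℝ)).and (hlim.eventually_lt_const hδ0))
  refine ⟨W, fun w hw => ?_⟩
  obtain ⟨hw1, hwδ⟩ := hW w hw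
  have hw0 : (0:ℝ) < w := lt_of_lt_of_le one_pos hw1
  have hxw : 0 < x ^ w := Real.rpow_pos_of_pos hx w
  set s : ℝ := (γ + (r:ℝ))/w with hsdef
  have hs0 : 0 ≤ s := by
    rw [hsdef]
    have hr0 : (0:ℝ) ≤ (r:ℝ) := Nat.cast_nonneg r
    exact div_nonneg (by linarith) hw0.le
  clear_value s
  set a : ℤ → ℝ := fun k => χ (Real.exp (-(k:ℝ)) * x ^ w) with hadef
  set F : ℤ → ℝ := fun k => mellinSteklov r f (Real.exp (1/w)) (Real.exp ((k:ℝ)/w)) with hFdef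
  have hsum_abs : Summable fun k => |a k| := hχ.summable_abs _ hxw
  have hsum_a : Summable a := hsum_abs.of_abs
  have hh1 : 1 < Real.exp (1/w) := Real.one_lt_exp_iff.mpr (one_div_pos.mpr hw0)
  have hFb : ∀ (k : ℤ) (c ε₂ : ℝ), 0 ≤ ε₂ →
      (∀ z : ℝ, 0 < z → Real.exp ((k:ℝ)/w) ≤ z →
        z ≤ Real.exp ((k:ℝ)/w) * Real.exp ((r:ℝ)/w) → |f z - c| ≤ ε₂) →
      |F k - c| ≤ K * ε₂ := by
    intro k c ε₂ hε₂ hcond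
    have := steklov_bound r hr f hmeas hh1 (Real.exp_pos ((k:ℝ)/w)) hε₂ (c := c) ?_
    · rw [hKdef]
      exact this
    intro m hm t ht
    have hprod1 : (1:ℝ) ≤ ∏ i, t i := by
      have := Finset.prod_le_prod (s := Finset.univ) (f := fun _ : Fin r => (1:ℝ)) (g := t)
        (fun i _ => zero_le_one) (fun i _ => (ht i).1)
      simpa using this
    have hprodle : ∏ i, t i ≤ Real.exp ((r:ℝ)/w) := by
      have h1 : ∏ i, t i ≤ ∏ _i : Fin r, Real.exp (1/w) :=
        Finset.prod_le_prod (fun i _ => le_trans zero_le_one (ht i).1) (fun i _ => (ht i).2)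
      rw [Finset.prod_const, Finset.card_univ, Fintype.card_fin, ← Real.exp_nat_mul] at h1
      refine le_trans h1 (le_of_eq ?_)
      congr 1
      field_simp
    have hmr : (m:ℝ)/(r:ℝ) ≤ 1 := by
      rw [div_le_one (by exact_mod_cast hr)]
      exact_mod_cast (Finset.mem_Icc.mp hm).2
    have hmr0 : 0 ≤ (m:ℝ)/(r:ℝ) := by positivity
    have hz1 : (1:ℝ) ≤ (∏ i, t i) ^ ((m:ℝ)/(r:ℝ)) := Real.one_le_rpow hprod1 hmr0
    have hzle : (∏ i, t i) ^ ((m:ℝ)/(r:ℝ)) ≤ Real.exp ((r:ℝ)/w) := by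
      calc (∏ i, t i) ^ ((m:ℝ)/(r:ℝ)) ≤ (∏ i, t i) ^ (1:ℝ) :=
            Real.rpow_le_rpow_of_exponent_le hprod1 hmr
        _ = ∏ i, t i := Real.rpow_one _
        _ ≤ _ := hprodle
    have hz0 : 0 < Real.exp ((k:ℝ)/w) * (∏ i, t i) ^ ((m:ℝ)/(r:ℝ)) :=
      mul_pos (Real.exp_pos _) (lt_of_lt_of_le one_pos hz1)
    have hzlo : Real.exp ((k:ℝ)/w) ≤ Real.exp ((k:ℝ)/w) * (∏ i, t i) ^ ((m:ℝ)/(r:ℝ)) :=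
      le_mul_of_one_le_right (Real.exp_pos _).le hz1
    have hzhi : Real.exp ((k:ℝ)/w) * (∏ i, t i) ^ ((m:ℝ)/(r:ℝ)) ≤
        Real.exp ((k:ℝ)/w) * Real.exp ((r:ℝ)/w) :=
      mul_le_mul_of_nonneg_left hzle (Real.exp_pos _).le
    exact hcond _ hz0 hzlo hzhi
  have hFfar : ∀ k, |F k - f x| ≤ K * (2*C) := by
    intro k
    refine hFb k (f x) (2*C) (by linarith) fun z hz _ _ => ?_
    have h1 := abs_le.mp (hC z hz)
    have h2 := abs_le.mp (hC x hx)
    rw [abs_le]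
    constructor <;> linarith
  have hnear : ∀ k : ℤ, |(k:ℝ) - w * Real.log x| ≤ γ → |F k - f x| ≤ K * ε' := by
    intro k hk
    refine hFb k (f x) ε' hε'.le fun z hz hzlo hzhi => ?_
    have hk1 := abs_le.mp hk
    have hkup : (k:ℝ)/w + (r:ℝ)/w ≤ Real.log x + s := by
      have h1 : ((k:ℝ) + r)/w ≤ (w * Real.log x + γ + r)/w :=
        (div_le_div_iff_of_pos_right hw0).mpr (by linarith [hk1.2])
      have h2 : ((k:ℝ) + r)/w = (k:ℝ)/w + (r:ℝ)/w := by ring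
      have h3 : (w * Real.log x + γ + r)/w = Real.log x + s := by
        rw [hsdef]; field_simp; ring
      linarith [h1, h2.symm.le, h3.le]
    have hklo : Real.log x - s ≤ (k:ℝ)/w := by
      have h1 : (w * Real.log x - γ)/w ≤ (k:ℝ)/w :=
        (div_le_div_iff_of_pos_right hw0).mpr (by linarith [hk1.1])
      have h2 : (w * Real.log x - γ)/w = Real.log x - γ/w := by field_simp
      have h3 : γ/w ≤ s := by
        rw [hsdef]
        have hr0 : (0:ℝ) ≤ (r:ℝ) := Nat.cast_nonneg r
        exact (div_le_div_iff_of_pos_right hw0).mpr (by linarith)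
      linarith
    have hzup : z ≤ x * Real.exp s := by
      calc z ≤ Real.exp ((k:ℝ)/w) * Real.exp ((r:ℝ)/w) := hzhi
        _ = Real.exp ((k:ℝ)/w + (r:ℝ)/w) := (Real.exp_add _ _).symm
        _ ≤ Real.exp (Real.log x + s) := Real.exp_le_exp.mpr hkup
        _ = x * Real.exp s := by rw [Real.exp_add, Real.exp_log hx]
    have hzlo' : x * Real.exp (-s) ≤ z := by
      calc x * Real.exp (-s) = Real.exp (Real.log x + -s) := by
            rw [Real.exp_add, Real.exp_log hx]
        _ ≤ Real.exp ((k:ℝ)/w) := Real.exp_le_exp.mpr (by linarith)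
        _ ≤ z := hzlo
    have hes := Real.add_one_le_exp s
    have hes' := Real.add_one_le_exp (-s)
    have hcmp : 1 - Real.exp (-s) ≤ Real.exp s - 1 := by linarith
    have hcmp2 : x * (1 - Real.exp (-s)) ≤ x * (Real.exp s - 1) :=
      mul_le_mul_of_nonneg_left hcmp hx.le
    have hzx : |z - x| < δ := by
      rw [abs_lt]
      constructor
      · linarith [hzlo', hcmp2, hwδ]
      · linarith [hzup, hwδ]
    have hd := hδ (Set.mem_Ioi.mpr hz) (by rw [Real.dist_eq]; exact hzx)
    rw [Real.dist_eq] at hd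
    exact hd.le
  have hsampeq : samplingOp χ r f w x = ∑' k, a k * F k := rfl
  have hFC : ∀ k, |F k| ≤ K * C := by
    intro k
    have := hFb k 0 C hC0 fun z hz _ _ => by simpa using hC z hz
    simpa using this
  have hsum_aF : Summable fun k => a k * F k := by
    refine Summable.of_abs (Summable.of_nonneg_of_le (fun k => abs_nonneg _)
      (fun k => ?_) (hsum_abs.mul_right (K*C)))
    rw [abs_mul]
    exact mul_le_mul_of_nonneg_left (hFC k) (abs_nonneg _)
  set b : ℤ → ℝ := fun k => |a k| * |F k - f x| with hbdef
  have hb_le : ∀ k, b k ≤ |a k| * (K*(2*C)) := fun k =>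
    mul_le_mul_of_nonneg_left (hFfar k) (abs_nonneg _)
  have hsum_b : Summable b :=
    Summable.of_nonneg_of_le (fun k => by positivity) hb_le (hsum_abs.mul_right _)
  have hsuma1 : (∑' k, a k) = 1 := by
    simp only [hadef]
    exact hχ.sum_eq_one _ hxw
  have hEq : samplingOp χ r f w x - f x = ∑' k, (a k * F k - a k * f x) := by
    rw [Summable.tsum_sub hsum_aF (hsum_a.mul_right (f x)), tsum_mul_right, hsuma1, one_mul, hsampeq]
  have habs : |samplingOp χ r f w x - f x| ≤ ∑' k, b k := by
    rw [hEq]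
    have hs2 : Summable fun k => ‖a k * F k - a k * f x‖ :=
      Summable.congr hsum_b fun k => by rw [Real.norm_eq_abs, ← mul_sub, abs_mul]
    calc |∑' k, (a k * F k - a k * f x)| ≤ ∑' k, ‖a k * F k - a k * f x‖ := by
          simpa [Real.norm_eq_abs] using norm_tsum_le_tsum_norm hs2
      _ = ∑' k, b k := tsum_congr fun k => by
          rw [Real.norm_eq_abs, ← mul_sub, abs_mul]
  set S : Set ℤ := {k : ℤ | γ < |(k:ℝ) - Real.log (x ^ w)|} with hSdef
  have hsplitsum : (∑' k : S, b k) + ∑' k : ↑Sᶜ, b k = ∑' k, b k :=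
    Summable.tsum_add_tsum_compl (hsum_b.subtype _) (hsum_b.subtype _)
  have hsubtype_le : ∀ (T : Set ℤ), ∑' k : T, |a ↑k| ≤ ∑' k, |a k| := fun T =>
    Summable.tsum_le_tsum_of_inj Subtype.val Subtype.val_injective (fun c _ => abs_nonneg _)
      (fun k => le_refl _) (hsum_abs.subtype _) hsum_abs
  have hfar_le : ∑' k : S, b k ≤ K * (2*C) * ε' := by
    have h1 : ∑' k : S, b ↑k ≤ ∑' k : S, K*(2*C) * |a ↑k| := by
      refine Summable.tsum_le_tsum (fun k => ?_) (hsum_b.subtype _) ((hsum_abs.mul_left _).subtype _)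
      calc b ↑k ≤ |a ↑k| * (K*(2*C)) := hb_le _
        _ = K*(2*C) * |a ↑k| := mul_comm _ _
    have h2 : ∑' k : S, |a ↑k| ≤ ε' := by
      have hbddγ : BddAbove (Set.range fun u : Set.Ioi (0:ℝ) =>
          ∑' k : {k : ℤ // γ < |(k : ℝ) - Real.log (u : ℝ)|},
            |χ (Real.exp (-((k : ℤ) : ℝ)) * (u : ℝ))|) := by
        refine ⟨M, ?_⟩
        rintro v ⟨u, rfl⟩
        refine le_trans (Summable.tsum_le_tsum_of_inj Subtype.val Subtype.val_injective
          (fun c _ => abs_nonneg _) (fun k => le_refl _)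
          ((hχ.summable_abs u u.2).comp_injective Subtype.val_injective)
          (hχ.summable_abs u u.2)) (hM u u.2)
      have h3 := le_ciSup hbddγ (⟨x ^ w, hxw⟩ : Set.Ioi (0:ℝ))
      exact le_trans h3 hτ.le
    calc ∑' k : S, b ↑k ≤ ∑' k : S, K*(2*C) * |a ↑k| := h1
      _ = K*(2*C) * ∑' k : S, |a ↑k| := tsum_mul_left
      _ ≤ K*(2*C) * ε' := mul_le_mul_of_nonneg_left h2 (mul_nonneg hK0 (by linarith))
  have hnear_le : ∑' k : ↑Sᶜ, b k ≤ K * ε' * M := by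
    have h1 : ∀ k : ↑Sᶜ, b ↑k ≤ K * ε' * |a ↑k| := by
      intro k
      have hkS : ¬ γ < |((k:ℤ):ℝ) - Real.log (x ^ w)| := k.2
      have hk : |((k:ℤ):ℝ) - w * Real.log x| ≤ γ := by
        rw [← Real.log_rpow hx]
        exact not_lt.mp hkS
      calc b ↑k = |a ↑k| * |F ↑k - f x| := rfl
        _ ≤ |a ↑k| * (K * ε') := mul_le_mul_of_nonneg_left (hnear ↑k hk) (abs_nonneg _)
        _ = K * ε' * |a ↑k| := mul_comm _ _
    calc ∑' k : ↑Sᶜ, b ↑k ≤ ∑' k : ↑Sᶜ, K * ε' * |a ↑k| :=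
          Summable.tsum_le_tsum h1 (hsum_b.subtype _) ((hsum_abs.mul_left _).subtype _)
      _ = K * ε' * ∑' k : ↑Sᶜ, |a ↑k| := tsum_mul_left
      _ ≤ K * ε' * M := mul_le_mul_of_nonneg_left
          (le_trans (hsubtype_le _) (hM _ hxw)) (mul_nonneg hK0 hε'.le)
  have htotal : |samplingOp χ r f w x - f x| ≤ K * (M + 2*C) * ε' := by
    linarith [habs, hfar_le, hnear_le, hsplitsum]
  have harith : K * (M + 2*C) * ε' ≤ ε / 2 := by
    have h1 : K * (M + 2*C) = B - 1 := by rw [hBdef]; ring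
    have h4 : ε' * (2*B) = ε := by
      rw [hε'def]
      exact div_mul_cancel₀ ε (ne_of_gt (by linarith))
    rw [h1]
    linarith [h4, hε'.le]
  rw [Real.dist_eq]
  calc |samplingOp χ r f w x - f x| ≤ K * (M + 2*C) * ε' := htotal
    _ ≤ ε / 2 := harith
    _ < ε := by linarith
end

section
/- Let χ : ℝ₊ → ℝ be a kernel in the class φ. For every γ > 0 and every ε > 0 there exists a constant M > 0 such that ∫_{{x ∈ ℝ₊ : x ∉ [e^{−M}, e^{M}]}} w |χ(e^{−k} x^{w})| dx/x < ε for all sufficiently large w and all k ∈ ℤ with k/w ∈ [−γ, γ]. -/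
open MeasureTheory Filter Set

open scoped NNReal ENNReal Topology

lemma mulHaar_setIntegral (F : ℝ → ℝ) (A : Set ℝ) (hA : MeasurableSet A) :
    ∫ x in A, F x ∂mulHaar = ∫ x in A ∩ Set.Ioi 0, x⁻¹ * F x := by
  have hmeas : Measurable fun x : ℝ => Real.toNNReal x⁻¹ :=
    measurable_real_toNNReal.comp measurable_inv
  have hrfl : mulHaar = (volume.restrict (Set.Ioi 0)).withDensity
      fun x => ((Real.toNNReal x⁻¹ : ℝ≥0) : ℝ≥0∞) := rfl
  rw [hrfl, setIntegral_withDensity_eq_setIntegral_smul hmeas F hA,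
    Measure.restrict_restrict hA]
  refine setIntegral_congr_fun (hA.inter measurableSet_Ioi) fun x hx => ?_
  have hx0 : (0:ℝ) < x := hx.2
  simp [NNReal.smul_def, Real.coe_toNNReal _ (inv_nonneg.mpr hx0.le)]

lemma kernel_integrableOn (χ : ℝ → ℝ) (hint : Integrable χ mulHaar) :
    IntegrableOn (fun v : ℝ => |χ v| * v⁻¹) (Set.Ioi 0) volume := by
  have hmeas : Measurable fun x : ℝ => ENNReal.ofReal x⁻¹ :=
    ENNReal.measurable_ofReal.comp measurable_inv
  have h1 : Integrable (fun x => χ x * (ENNReal.ofReal x⁻¹).toReal)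
      (volume.restrict (Set.Ioi 0)) := by
    rw [mulHaar, integrable_withDensity_iff hmeas
      (ae_of_all _ fun x => ENNReal.ofReal_lt_top)] at hint
    exact hint
  have h2 : Integrable (fun x => χ x * x⁻¹) (volume.restrict (Set.Ioi 0)) := by
    refine h1.congr ?_
    filter_upwards [ae_restrict_mem measurableSet_Ioi] with x hx
    rw [ENNReal.toReal_ofReal (inv_nonneg.mpr (le_of_lt hx))]
  refine h2.abs.congr ?_
  filter_upwards [ae_restrict_mem measurableSet_Ioi] with x hx
  rw [abs_mul, abs_of_nonneg (a := x⁻¹) (inv_nonneg.mpr (le_of_lt hx))]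

lemma kernel_tail_small (χ : ℝ → ℝ) (hint : Integrable χ mulHaar) {ε : ℝ} (hε : 0 < ε) :
    ∃ n : ℕ, (∫ v in Set.Ioi 0 ∩ (Set.Icc (Real.exp (-(n:ℝ))) (Real.exp (n:ℝ)))ᶜ,
      |χ v| * v⁻¹) < ε := by
  set f : ℝ → ℝ := fun v => |χ v| * v⁻¹ with hf
  have hfi : Integrable f (volume.restrict (Set.Ioi 0)) := kernel_integrableOn χ hint
  set μ0 := volume.restrict (Set.Ioi (0:ℝ)) with hμ0
  set s : ℕ → Set ℝ := fun n => Set.Icc (Real.exp (-(n:ℝ))) (Real.exp (n:ℝ)) with hs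
  have hsm : ∀ n, MeasurableSet (s n) := fun n => measurableSet_Icc
  have hmono : Monotone s := by
    intro m n hmn
    exact Set.Icc_subset_Icc
      (Real.exp_le_exp.mpr (neg_le_neg (Nat.cast_le.mpr hmn)))
      (Real.exp_le_exp.mpr (Nat.cast_le.mpr hmn))
  have hsub : Set.Ioi (0:ℝ) ⊆ ⋃ n, s n := by
    intro v hv
    obtain ⟨n, hn⟩ := exists_nat_ge |Real.log v|
    refine Set.mem_iUnion.mpr ⟨n, ?_, ?_⟩
    · rw [← Real.exp_log hv]
      exact Real.exp_le_exp.mpr (le_trans (neg_le_neg hn) (neg_abs_le _))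
    · rw [← Real.exp_log hv]
      exact Real.exp_le_exp.mpr (le_trans (le_abs_self _) hn)
  have hU : MeasurableSet (⋃ n, s n) := MeasurableSet.iUnion hsm
  have hUint : ∫ v in ⋃ n, s n, f v ∂μ0 = ∫ v, f v ∂μ0 := by
    rw [hμ0, Measure.restrict_restrict hU, Set.inter_eq_right.mpr hsub]
  have hTend : Tendsto (fun n => ∫ v in s n, f v ∂μ0) atTop (𝓝 (∫ v, f v ∂μ0)) := by
    have := tendsto_setIntegral_of_monotone hsm hmono hfi.integrableOn
    rwa [hUint] at this
  have hTail : Tendsto (fun n => ∫ v in (s n)ᶜ, f v ∂μ0) atTop (𝓝 0) := by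
    have h1 : ∀ n, ∫ v in (s n)ᶜ, f v ∂μ0 = ∫ v, f v ∂μ0 - ∫ v in s n, f v ∂μ0 := by
      intro n
      have h2 := integral_add_compl (hsm n) hfi
      linarith
    simp_rw [h1]
    have := (tendsto_const_nhds (x := ∫ v, f v ∂μ0) (f := atTop)).sub hTend
    simpa using this
  obtain ⟨n, hn⟩ := (hTail.eventually_lt_const hε).exists
  refine ⟨n, ?_⟩
  have heq : ∫ v in (s n)ᶜ, f v ∂μ0 = ∫ v in Set.Ioi 0 ∩ (s n)ᶜ, f v := by
    rw [hμ0, Measure.restrict_restrict (hsm n).compl, Set.inter_comm]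
  rw [← heq]
  exact hn

theorem stmt_10' (χ : ℝ → ℝ) (hχint : Integrable χ mulHaar) (γ ε : ℝ) (hγ : 0 < γ) (hε : 0 < ε) :
    ∃ M > (0:ℝ), ∃ W : ℝ, ∀ w ≥ W, ∀ k : ℤ, (k : ℝ) / w ∈ Set.Icc (-γ) γ →
      (∫ x in (Set.Icc (Real.exp (-M)) (Real.exp M))ᶜ,
        w * |χ (Real.exp (-(k : ℝ)) * x ^ w)| ∂mulHaar) < ε := by
  obtain ⟨n, hn⟩ := kernel_tail_small χ hχint hε
  refine ⟨γ + 1, by linarith, max (n:ℝ) 1, fun w hw k hk => ?_⟩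
  set M : ℝ := γ + 1 with hMdef
  have hw1 : (1:ℝ) ≤ w := le_trans (le_max_right _ _) hw
  have hw0 : (0:ℝ) < w := lt_of_lt_of_le one_pos hw1
  have hwn : (n:ℝ) ≤ w := le_trans (le_max_left _ _) hw
  have hkle : (k:ℝ) ≤ γ * w := by
    have := (div_le_iff₀ hw0).mp hk.2
    linarith
  have hkge : -(γ * w) ≤ (k:ℝ) := by
    have := (le_div_iff₀ hw0).mp hk.1
    linarith
  set c : ℝ := Real.exp (-(k:ℝ)) with hcdef
  set e : ℝ := Real.exp ((k:ℝ)) with hedef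
  set a : ℝ := Real.exp (-(M*w)) with hadef
  set b : ℝ := Real.exp (M*w) with hbdef
  set a' : ℝ := Real.exp (-(M*w) - (k:ℝ)) with ha'def
  set b' : ℝ := Real.exp (M*w - (k:ℝ)) with hb'def
  set f : ℝ → ℝ := fun v => |χ v| * v⁻¹ with hfdef
  set g : ℝ → ℝ :=
    fun y => ((Set.Icc a b)ᶜ).indicator (fun y => |χ (c * y)| * y⁻¹) y with hgdef
  set H : ℝ → ℝ :=
    fun y => (Set.Ioi 0 ∩ (Set.Icc a b)ᶜ).indicator (fun y => |χ (c * y)| * y⁻¹) y with hHdef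
  have he0 : (0:ℝ) < e := Real.exp_pos _
  -- Step A: density
  have stepA : (∫ x in (Set.Icc (Real.exp (-M)) (Real.exp M))ᶜ,
      w * |χ (c * x ^ w)| ∂mulHaar)
      = ∫ x in Set.Ioi 0, ((Set.Icc (Real.exp (-M)) (Real.exp M))ᶜ).indicator
          (fun x => x⁻¹ * (w * |χ (c * x ^ w)|)) x := by
    rw [mulHaar_setIntegral _ _ measurableSet_Icc.compl, Set.inter_comm,
      ← setIntegral_indicator measurableSet_Icc.compl]
  -- Step C: rpow substitution
  have key : ∀ x ∈ Set.Ioi (0:ℝ),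
      (|w| * x ^ (w - 1)) • g (x ^ w)
      = ((Set.Icc (Real.exp (-M)) (Real.exp M))ᶜ).indicator
          (fun x => x⁻¹ * (w * |χ (c * x ^ w)|)) x := by
    intro x hx
    have hx0 : (0:ℝ) < x := hx
    have h1 : a ≤ x ^ w ↔ Real.exp (-M) ≤ x := by
      rw [hadef, show -(M*w) = -M*w by ring, Real.exp_mul]
      exact Real.rpow_le_rpow_iff (Real.exp_pos _).le hx0.le hw0
    have h2 : x ^ w ≤ b ↔ x ≤ Real.exp M := by
      rw [hbdef, Real.exp_mul]
      exact Real.rpow_le_rpow_iff hx0.le (Real.exp_pos _).le hw0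
    have hmem : x ^ w ∈ Set.Icc a b ↔ x ∈ Set.Icc (Real.exp (-M)) (Real.exp M) := by
      simp only [Set.mem_Icc]
      exact and_congr h1 h2
    by_cases hc : x ∈ Set.Icc (Real.exp (-M)) (Real.exp M)
    · rw [hgdef]
      simp only
      rw [Set.indicator_of_notMem (Set.notMem_compl_iff.mpr (hmem.mpr hc)),
        Set.indicator_of_notMem (Set.notMem_compl_iff.mpr hc), smul_zero]
    · rw [hgdef]
      simp only
      rw [Set.indicator_of_mem (Set.mem_compl (fun h => hc (hmem.mp h))),
        Set.indicator_of_mem (Set.mem_compl hc)]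
      have hxw : (0:ℝ) < x ^ w := Real.rpow_pos_of_pos hx0 w
      have hpow : x ^ (w-1) = x ^ w / x := by
        rw [Real.rpow_sub hx0, Real.rpow_one]
      rw [smul_eq_mul, abs_of_pos hw0, hpow]
      field_simp
  have stepC : (∫ x in Set.Ioi 0, ((Set.Icc (Real.exp (-M)) (Real.exp M))ᶜ).indicator
        (fun x => x⁻¹ * (w * |χ (c * x ^ w)|)) x)
      = ∫ y in Set.Ioi 0, g y := by
    rw [← integral_comp_rpow_Ioi g hw0.ne']
    exact (setIntegral_congr_fun measurableSet_Ioi key).symm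
  -- Step D: move to whole-line integral
  have stepD : (∫ y in Set.Ioi 0, g y) = ∫ y, H y := by
    rw [hgdef]
    rw [setIntegral_indicator measurableSet_Icc.compl,
      ← integral_indicator (measurableSet_Ioi.inter measurableSet_Icc.compl)]
  -- Step E: scaling y = e * v
  have hmem2 : ∀ v : ℝ, e * v ∈ Set.Ioi 0 ∩ (Set.Icc a b)ᶜ
      ↔ v ∈ Set.Ioi 0 ∩ (Set.Icc a' b')ᶜ := by
    intro v
    have hea' : e * a' = a := by
      rw [hedef, ha'def, hadef, ← Real.exp_add]; ring_nf
    have heb' : e * b' = b := by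
      rw [hedef, hb'def, hbdef, ← Real.exp_add]; ring_nf
    constructor
    · rintro ⟨h01, h02⟩
      refine ⟨?_, fun hmem => h02 ?_⟩
      · have := mul_pos (inv_pos.mpr he0) h01
        rwa [inv_mul_cancel_left₀ he0.ne'] at this
      · obtain ⟨hl, hr⟩ := hmem
        exact ⟨by rw [← hea']; exact (mul_le_mul_iff_right₀ he0).mpr hl,
          by rw [← heb']; exact (mul_le_mul_iff_right₀ he0).mpr hr⟩
    · rintro ⟨h01, h02⟩
      refine ⟨mul_pos he0 h01, fun hmem => h02 ?_⟩
      obtain ⟨hl, hr⟩ := hmem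
      rw [← hea'] at hl; rw [← heb'] at hr
      exact ⟨(mul_le_mul_iff_right₀ he0).mp hl, (mul_le_mul_iff_right₀ he0).mp hr⟩
  have keyE : ∀ v : ℝ, e * H (e * v)
      = (Set.Ioi 0 ∩ (Set.Icc a' b')ᶜ).indicator f v := by
    intro v
    by_cases hv : v ∈ Set.Ioi 0 ∩ (Set.Icc a' b')ᶜ
    · rw [hHdef]
      simp only
      rw [Set.indicator_of_mem ((hmem2 v).mpr hv), Set.indicator_of_mem hv]
      have hce : c * (e * v) = v := by
        rw [hcdef, hedef, ← mul_assoc, ← Real.exp_add]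
        simp
      rw [hce, hfdef]
      have hv0 : v ≠ 0 := ne_of_gt hv.1
      field_simp [he0.ne']
    · rw [hHdef]
      simp only
      rw [Set.indicator_of_notMem (fun h => hv ((hmem2 v).mp h)),
        Set.indicator_of_notMem hv, mul_zero]
  have stepE : (∫ y, H y) = ∫ v in Set.Ioi 0 ∩ (Set.Icc a' b')ᶜ, f v := by
    have hcomp := MeasureTheory.Measure.integral_comp_mul_left H e
    have habs : |e⁻¹| = e⁻¹ := abs_of_pos (inv_pos.mpr he0)
    rw [habs, smul_eq_mul] at hcomp
    have : (∫ y, H y) = e * ∫ v, H (e * v) := by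
      rw [hcomp, ← mul_assoc, mul_inv_cancel₀ he0.ne', one_mul]
    rw [this, ← integral_const_mul]
    rw [← integral_indicator (measurableSet_Ioi.inter measurableSet_Icc.compl)]
    exact integral_congr_ae (ae_of_all _ keyE)
  -- Step F: monotonicity and conclusion
  have hincl : Set.Ioi 0 ∩ (Set.Icc a' b')ᶜ
      ⊆ Set.Ioi 0 ∩ (Set.Icc (Real.exp (-(n:ℝ))) (Real.exp (n:ℝ)))ᶜ := by
    refine Set.inter_subset_inter_right _ (Set.compl_subset_compl.mpr ?_)
    refine Set.Icc_subset_Icc ?_ ?_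
    · rw [ha'def]
      refine Real.exp_le_exp.mpr ?_
      have : M * w = γ * w + w := by rw [hMdef]; ring
      linarith
    · rw [hb'def]
      refine Real.exp_le_exp.mpr ?_
      have : M * w = γ * w + w := by rw [hMdef]; ring
      linarith
  have hTn : IntegrableOn f (Set.Ioi 0 ∩ (Set.Icc (Real.exp (-(n:ℝ))) (Real.exp (n:ℝ)))ᶜ)
      volume := (kernel_integrableOn χ hχint).mono_set Set.inter_subset_left
  have hnonneg : 0 ≤ᵐ[volume.restrict (Set.Ioi 0 ∩
      (Set.Icc (Real.exp (-(n:ℝ))) (Real.exp (n:ℝ)))ᶜ)] f := by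
    filter_upwards [ae_restrict_mem ((measurableSet_Ioi).inter measurableSet_Icc.compl)]
      with v hv
    have hv0 : (0:ℝ) < v := hv.1
    rw [hfdef]
    positivity
  have stepF : (∫ v in Set.Ioi 0 ∩ (Set.Icc a' b')ᶜ, f v)
      ≤ ∫ v in Set.Ioi 0 ∩ (Set.Icc (Real.exp (-(n:ℝ))) (Real.exp (n:ℝ)))ᶜ, f v :=
    setIntegral_mono_set hTn hnonneg (HasSubset.Subset.eventuallyLE hincl)
  calc (∫ x in (Set.Icc (Real.exp (-M)) (Real.exp M))ᶜ,
        w * |χ (c * x ^ w)| ∂mulHaar)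
      = ∫ v in Set.Ioi 0 ∩ (Set.Icc a' b')ᶜ, f v := by
        rw [stepA, stepC, stepD, stepE]
    _ ≤ ∫ v in Set.Ioi 0 ∩ (Set.Icc (Real.exp (-(n:ℝ))) (Real.exp (n:ℝ)))ᶜ, f v := stepF
    _ < ε := hn

/-- truncated-integral smallness lemma for kernels in `φ`. -/
theorem stmt_10 (χ : ℝ → ℝ) (hχ : IsKernel χ) (γ ε : ℝ) (hγ : 0 < γ) (hε : 0 < ε) :
    ∃ M > (0:ℝ), ∃ W : ℝ, ∀ w ≥ W, ∀ k : ℤ, (k : ℝ) / w ∈ Set.Icc (-γ) γ →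
      (∫ x in (Set.Icc (Real.exp (-M)) (Real.exp M))ᶜ,
        w * |χ (Real.exp (-(k : ℝ)) * x ^ w)| ∂mulHaar) < ε :=
  stmt_10' χ hχ.integrable γ ε hγ hε
end
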